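/- If 𝔘 is a Banach algebra with 𝔘♯ symmetrically pseudo-amenable, then every bounded Jordan derivation from 𝔘 into a symmetric Banach 𝔘-bimodule X is a derivation. -/

import Mathlib

open Filter Topology

universe u

/-- A realization of the projective Banach-space tensor square `A ⊗̂ A` of a (non-unital)
Banach algebra `A`, together with the canonical bimodule operations `a•t`, `t•a`, the
"opposite" operations `a∘t`, `t∘a`, the product maps `π`, `π°` and the flip map, each
characterized by its values on elementary tensors.  The norm is the projective tensor norm:
`‖a ⊗ b‖ ≤ ‖a‖‖b‖` and every element is an absolutely convergent sum of elementary tensors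
whose total norm is arbitrarily close to its norm; moreover bounded bilinear maps lift. -/
structure ProjTensorSquare (A : Type u) [NonUnitalNormedRing A] [NormedSpace ℂ A]
    [IsScalarTower ℂ A A] [SMulCommClass ℂ A A] [CompleteSpace A] where
  /-- the underlying Banach space of `A ⊗̂ A` -/
  T : Type u
  [nacg : NormedAddCommGroup T]
  [nsp : NormedSpace ℂ T]
  [cplt : CompleteSpace T]
  /-- the canonical bilinear map `(a, b) ↦ a ⊗ b` -/
  tmul : A →L[ℂ] A →L[ℂ] T
  norm_tmul_le : ∀ a b : A, ‖tmul a b‖ ≤ ‖a‖ * ‖b‖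
  /-- the projective norm property -/
  exists_rep : ∀ (t : T) (ε : ℝ), 0 < ε → ∃ u v : ℕ → A,
      Summable (fun n => ‖u n‖ * ‖v n‖) ∧ HasSum (fun n => tmul (u n) (v n)) t ∧
      ∑' n, ‖u n‖ * ‖v n‖ ≤ ‖t‖ + ε
  /-- the universal property: bounded bilinear maps into a Banach space lift to `T` -/
  lift : ∀ {X : Type u} [NormedAddCommGroup X] [NormedSpace ℂ X] [CompleteSpace X]
      (f : A →L[ℂ] A →L[ℂ] X), ∃ g : T →L[ℂ] X, (∀ a b, g (tmul a b) = f a b) ∧ ‖g‖ ≤ ‖f‖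
  /-- the left module action: `a • (b ⊗ c) = (a * b) ⊗ c` -/
  lmul : A → T →L[ℂ] T
  lmul_tmul : ∀ a b c, lmul a (tmul b c) = tmul (a * b) c
  /-- the right module action: `(b ⊗ c) • a = b ⊗ (c * a)` -/
  rmul : A → T →L[ℂ] T
  rmul_tmul : ∀ a b c, rmul a (tmul b c) = tmul b (c * a)
  /-- the left opposite action: `a ∘ (b ⊗ c) = b ⊗ (a * c)` -/
  lcirc : A → T →L[ℂ] T
  lcirc_tmul : ∀ a b c, lcirc a (tmul b c) = tmul b (a * c)
  /-- the right opposite action: `(b ⊗ c) ∘ a = (b * a) ⊗ c` -/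
  rcirc : A → T →L[ℂ] T
  rcirc_tmul : ∀ a b c, rcirc a (tmul b c) = tmul (b * a) c
  /-- the product map `π : b ⊗ c ↦ b * c` -/
  π : T →L[ℂ] A
  π_tmul : ∀ b c, π (tmul b c) = b * c
  /-- the opposite product map `π° : b ⊗ c ↦ c * b` -/
  πop : T →L[ℂ] A
  πop_tmul : ∀ b c, πop (tmul b c) = c * b
  /-- the flip map `(b ⊗ c)° = c ⊗ b` -/
  flip : T →L[ℂ] T
  flip_tmul : ∀ b c, flip (tmul b c) = tmul c b

attribute [instance] ProjTensorSquare.nacg ProjTensorSquare.nsp ProjTensorSquare.cplt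

namespace ProjTensorSquare

variable {A : Type u} [NonUnitalNormedRing A] [NormedSpace ℂ A]
    [IsScalarTower ℂ A A] [SMulCommClass ℂ A A] [CompleteSpace A]

/-- `t` is an approximate diagonal for `A` consisting of symmetric tensors, along the
filter `l`:  each `t i` is symmetric, `a • tᵢ - tᵢ • a → 0` and `π(tᵢ) a → a` for all `a`. -/
def IsSymmApproxDiagonal (P : ProjTensorSquare A) {ι : Type u} (l : Filter ι)
    (t : ι → P.T) : Prop :=
  (∀ i, P.flip (t i) = t i) ∧
  (∀ a : A, Tendsto (fun i => P.lmul a (t i) - P.rmul a (t i)) l (𝓝 0)) ∧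
  (∀ a : A, Tendsto (fun i => P.π (t i) * a) l (𝓝 a))

/-- A Banach algebra is symmetrically pseudo-amenable if it has a (not necessarily bounded)
approximate diagonal consisting of symmetric tensors. -/
def SymmPseudoAmenable (P : ProjTensorSquare A) : Prop :=
  ∃ (ι : Type u) (l : Filter ι) (t : ι → P.T), l.NeBot ∧ P.IsSymmApproxDiagonal l t

end ProjTensorSquare

/-- A Banach `A`-bimodule: a Banach space with commuting bounded left and right `A`-actions. -/
structure BanachBimodule (A X : Type u) [NonUnitalNormedRing A] [NormedSpace ℂ A]
    [NormedAddCommGroup X] [NormedSpace ℂ X] where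
  /-- the left action `(a, x) ↦ a • x` -/
  lsmul : A →L[ℂ] X →L[ℂ] X
  /-- the right action `(a, x) ↦ x • a` -/
  rsmul : A →L[ℂ] X →L[ℂ] X
  lsmul_mul : ∀ a b x, lsmul (a * b) x = lsmul a (lsmul b x)
  rsmul_mul : ∀ a b x, rsmul (a * b) x = rsmul b (rsmul a x)
  lsmul_rsmul : ∀ a b x, lsmul a (rsmul b x) = rsmul b (lsmul a x)

namespace BanachBimodule

variable {A X : Type u} [NonUnitalNormedRing A] [NormedSpace ℂ A]
  [NormedAddCommGroup X] [NormedSpace ℂ X]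

/-- `D(ab) = D(a)·b + a·D(b)` -/
def IsDerivation (M : BanachBimodule A X) (D : A → X) : Prop :=
  ∀ a b, D (a * b) = M.rsmul b (D a) + M.lsmul a (D b)

/-- `D(ab + ba) = D(a)·b + a·D(b) + D(b)·a + b·D(a)` -/
def IsJordanDerivation (M : BanachBimodule A X) (D : A → X) : Prop :=
  ∀ a b, D (a * b + b * a) =
    M.rsmul b (D a) + M.lsmul a (D b) + M.rsmul a (D b) + M.lsmul b (D a)

/-- `D(ab − ba) = D(a)·b + a·D(b) − D(b)·a − b·D(a)` -/
def IsLieDerivation (M : BanachBimodule A X) (D : A → X) : Prop :=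
  ∀ a b, D (a * b - b * a) =
    M.rsmul b (D a) + M.lsmul a (D b) - M.rsmul a (D b) - M.lsmul b (D a)

/-- the center `Z_𝔘(X) = {x ∈ X | a·x = x·a for all a ∈ 𝔘}` -/
def center (M : BanachBimodule A X) : Set X := {x | ∀ a, M.lsmul a x = M.rsmul a x}

/-- the left action extended to the `ℓ¹`-unitization `𝔘♯`, via `1 • x = x` -/
noncomputable def uLsmul (M : BanachBimodule A X) (a : WithLp 1 (Unitization ℂ A)) (x : X) : X :=
  (WithLp.equiv 1 (Unitization ℂ A) a).fst • x + M.lsmul ((WithLp.equiv 1 (Unitization ℂ A)) a).snd x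

/-- the right action extended to the `ℓ¹`-unitization `𝔘♯`, via `x • 1 = x` -/
noncomputable def uRsmul (M : BanachBimodule A X) (a : WithLp 1 (Unitization ℂ A)) (x : X) : X :=
  (WithLp.equiv 1 (Unitization ℂ A) a).fst • x + M.rsmul ((WithLp.equiv 1 (Unitization ℂ A)) a).snd x

end BanachBimodule

namespace JDaux

set_option linter.unusedSectionVars false

variable {A X : Type u} [NonUnitalNormedRing A] [NormedSpace ℂ A]
    [IsScalarTower ℂ A A] [SMulCommClass ℂ A A] [CompleteSpace A]
    [NormedAddCommGroup X] [NormedSpace ℂ X] [CompleteSpace X]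

/-- the scalar part, as a continuous linear map on the `ℓ¹` unitization -/
noncomputable def fstL : WithLp 1 (Unitization ℂ A) →L[ℂ] ℂ :=
  LinearMap.mkContinuous
    { toFun := fun u => ((WithLp.equiv 1 (Unitization ℂ A)) u).fst
      map_add' := fun u v => rfl
      map_smul' := fun c u => rfl } 1
    (fun u => by
      rw [one_mul, WithLp.unitization_norm_def]
      exact le_add_of_nonneg_right (norm_nonneg _))

@[simp] lemma fstL_apply (u : WithLp 1 (Unitization ℂ A)) :
    fstL u = ((WithLp.equiv 1 (Unitization ℂ A)) u).fst := rfl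

/-- the `A` part, as a continuous linear map on the `ℓ¹` unitization -/
noncomputable def sndL : WithLp 1 (Unitization ℂ A) →L[ℂ] A :=
  LinearMap.mkContinuous
    { toFun := fun u => ((WithLp.equiv 1 (Unitization ℂ A)) u).snd
      map_add' := fun u v => rfl
      map_smul' := fun c u => rfl } 1
    (fun u => by
      rw [one_mul, WithLp.unitization_norm_def]
      exact le_add_of_nonneg_left (norm_nonneg _))

@[simp] lemma sndL_apply (u : WithLp 1 (Unitization ℂ A)) :
    sndL u = ((WithLp.equiv 1 (Unitization ℂ A)) u).snd := rfl

/-- the extended left action as a continuous bilinear map -/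
noncomputable def sigma (M : BanachBimodule A X) :
    WithLp 1 (Unitization ℂ A) →L[ℂ] X →L[ℂ] X :=
  (ContinuousLinearMap.lsmul ℂ ℂ).comp fstL + M.lsmul.comp sndL

@[simp] lemma sigma_apply (M : BanachBimodule A X) (u : WithLp 1 (Unitization ℂ A)) (x : X) :
    sigma M u x = ((WithLp.equiv 1 (Unitization ℂ A)) u).fst • x
      + M.lsmul ((WithLp.equiv 1 (Unitization ℂ A)) u).snd x := by
  simp [sigma]

/-- the extension of `D` to the unitization, killing the unit -/
noncomputable def Dext (D : A →L[ℂ] X) : WithLp 1 (Unitization ℂ A) →L[ℂ] X :=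
  D.comp sndL

@[simp] lemma Dext_apply (D : A →L[ℂ] X) (u : WithLp 1 (Unitization ℂ A)) :
    Dext D u = D ((WithLp.equiv 1 (Unitization ℂ A)) u).snd := rfl

/-- the Jordan-derivation defect bilinear map -/
noncomputable def delta2 (M : BanachBimodule A X) (D : A →L[ℂ] X) :
    WithLp 1 (Unitization ℂ A) →L[ℂ] WithLp 1 (Unitization ℂ A) →L[ℂ] X :=
  (ContinuousLinearMap.compL ℂ (WithLp 1 (Unitization ℂ A))
      (WithLp 1 (Unitization ℂ A)) X (Dext D)).comp
      (ContinuousLinearMap.mul ℂ (WithLp 1 (Unitization ℂ A)))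
    - ((ContinuousLinearMap.compL ℂ (WithLp 1 (Unitization ℂ A)) X X).flip
        (Dext D)).comp (sigma M)
    - (sigma M).flip.comp (Dext D)

lemma delta2_apply (M : BanachBimodule A X) (D : A →L[ℂ] X)
    (u v : WithLp 1 (Unitization ℂ A)) :
    delta2 M D u v = Dext D (u * v) - sigma M u (Dext D v) - sigma M v (Dext D u) := by
  simp only [delta2, ContinuousLinearMap.sub_apply, ContinuousLinearMap.comp_apply,
    ContinuousLinearMap.compL_apply, ContinuousLinearMap.flip_apply,
    ContinuousLinearMap.mul_apply']

lemma delta2_apply' (M : BanachBimodule A X) (D : A →L[ℂ] X)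
    (u v : WithLp 1 (Unitization ℂ A)) :
    delta2 M D u v = D (((WithLp.equiv 1 (Unitization ℂ A)) u).snd
        * ((WithLp.equiv 1 (Unitization ℂ A)) v).snd)
      - M.lsmul ((WithLp.equiv 1 (Unitization ℂ A)) u).snd
          (D ((WithLp.equiv 1 (Unitization ℂ A)) v).snd)
      - M.lsmul ((WithLp.equiv 1 (Unitization ℂ A)) v).snd
          (D ((WithLp.equiv 1 (Unitization ℂ A)) u).snd) := by
  rw [delta2_apply]
  have hm : (WithLp.equiv 1 (Unitization ℂ A)) (u * v) =
      (WithLp.equiv 1 (Unitization ℂ A)) u * (WithLp.equiv 1 (Unitization ℂ A)) v := rfl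
  simp only [Dext_apply, sigma_apply, hm, Unitization.snd_mul,
    map_add, map_smul, ContinuousLinearMap.add_apply]
  abel

lemma sigma_one (M : BanachBimodule A X) (x : X) : sigma M 1 x = x := by
  have h : (WithLp.equiv 1 (Unitization ℂ A)) (1 : WithLp 1 (Unitization ℂ A)) = 1 := rfl
  simp [sigma_apply, h]

lemma sigma_mul (M : BanachBimodule A X) (u v : WithLp 1 (Unitization ℂ A)) (x : X) :
    sigma M (u * v) x = sigma M u (sigma M v x) := by
  have hm : (WithLp.equiv 1 (Unitization ℂ A)) (u * v) =
      (WithLp.equiv 1 (Unitization ℂ A)) u * (WithLp.equiv 1 (Unitization ℂ A)) v := rfl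
  simp only [sigma_apply, hm, Unitization.fst_mul, Unitization.snd_mul,
    map_add, map_smul, ContinuousLinearMap.add_apply, ContinuousLinearMap.coe_smul',
    Pi.smul_apply, smul_add, mul_smul, BanachBimodule.lsmul_mul]
  rw [smul_comm ((WithLp.equiv 1 (Unitization ℂ A)) u).fst
    ((WithLp.equiv 1 (Unitization ℂ A)) v).fst x]
  abel

lemma lsmul_lsmul_comm (M : BanachBimodule A X)
    (hsymm : ∀ (a : A) (x : X), M.lsmul a x = M.rsmul a x) (a b : A) (x : X) :
    M.lsmul a (M.lsmul b x) = M.lsmul b (M.lsmul a x) := by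
  rw [hsymm b x, M.lsmul_rsmul a b x, ← hsymm b (M.lsmul a x)]

lemma sigma_comm (M : BanachBimodule A X)
    (hsymm : ∀ (a : A) (x : X), M.lsmul a x = M.rsmul a x)
    (u v : WithLp 1 (Unitization ℂ A)) (x : X) :
    sigma M u (sigma M v x) = sigma M v (sigma M u x) := by
  simp only [sigma_apply, map_add, map_smul, smul_add]
  rw [lsmul_lsmul_comm M hsymm,
    smul_comm ((WithLp.equiv 1 (Unitization ℂ A)) u).fst
      ((WithLp.equiv 1 (Unitization ℂ A)) v).fst x]
  abel

lemma delta2_skew (M : BanachBimodule A X) (D : A →L[ℂ] X)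
    (hsymm : ∀ (a : A) (x : X), M.lsmul a x = M.rsmul a x)
    (hD : M.IsJordanDerivation D) (u v : WithLp 1 (Unitization ℂ A)) :
    delta2 M D v u = - delta2 M D u v := by
  rw [delta2_apply', delta2_apply']
  set a := ((WithLp.equiv 1 (Unitization ℂ A)) u).snd
  set b := ((WithLp.equiv 1 (Unitization ℂ A)) v).snd
  have h := hD a b
  rw [map_add, ← hsymm b (D a), ← hsymm a (D b)] at h
  have h2 : D (b * a) = M.lsmul b (D a) + M.lsmul a (D b) + M.lsmul a (D b)
      + M.lsmul b (D a) - D (a * b) := by rw [← h]; abel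
  rw [h2]; abel

lemma delta2_cocycle (M : BanachBimodule A X) (D : A →L[ℂ] X)
    (hsymm : ∀ (a : A) (x : X), M.lsmul a x = M.rsmul a x)
    (u v w : WithLp 1 (Unitization ℂ A)) :
    delta2 M D (u * v) w = sigma M u (delta2 M D v w) + delta2 M D u (v * w)
      - sigma M w (delta2 M D u v) := by
  simp only [delta2_apply, map_sub, sigma_mul, mul_assoc]
  rw [sigma_comm M hsymm w u (Dext D v), sigma_comm M hsymm w v (Dext D u)]
  abel

lemma ext_T {C : Type u} [NonUnitalNormedRing C] [NormedSpace ℂ C]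
    [IsScalarTower ℂ C C] [SMulCommClass ℂ C C] [CompleteSpace C]
    (P : ProjTensorSquare C) {Y : Type*} [NormedAddCommGroup Y] [NormedSpace ℂ Y]
    (f g : P.T →L[ℂ] Y) (h : ∀ u v, f (P.tmul u v) = g (P.tmul u v)) (s : P.T) :
    f s = g s := by
  obtain ⟨u, v, -, hsum, -⟩ := P.exists_rep s 1 one_pos
  have h1 := f.hasSum hsum
  have h2 := g.hasSum hsum
  rw [show (fun n => f (P.tmul (u n) (v n))) = (fun n => g (P.tmul (u n) (v n)))
    from funext fun n => h _ _] at h1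
  exact h1.unique h2

end JDaux



open JDaux in
set_option maxHeartbeats 2000000 in
/-- If `𝔘` is a Banach algebra with `𝔘♯` symmetrically pseudo-amenable, then
every bounded Jordan derivation from `𝔘` into a symmetric Banach `𝔘`-bimodule `X` is a
derivation. -/
theorem jordanDerivation_isDerivation_of_symmetric_bimodule {A X : Type u} [NonUnitalNormedRing A] [NormedSpace ℂ A]
    [IsScalarTower ℂ A A] [SMulCommClass ℂ A A] [CompleteSpace A]
    [NormedAddCommGroup X] [NormedSpace ℂ X] [CompleteSpace X]
    (P : ProjTensorSquare (WithLp 1 (Unitization ℂ A))) (hP : P.SymmPseudoAmenable)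
    (M : BanachBimodule A X) (hsymm : ∀ (a : A) (x : X), M.lsmul a x = M.rsmul a x)
    (D : A →L[ℂ] X) (hD : M.IsJordanDerivation D) :
    M.IsDerivation D := by
  classical
  obtain ⟨ι, l, t, hl, hflip, hcomm, hπ⟩ := hP
  haveI := hl
  open JDaux in
  have hone := sigma_one M
  have hmul := sigma_mul M
  have hcom := sigma_comm M hsymm
  have hskew := delta2_skew M D hsymm hD
  have hcoc := delta2_cocycle M D hsymm
  -- lift of the defect bilinear map
  obtain ⟨Φ, hΦ, -⟩ := P.lift (delta2 M D)
  -- lifts of the maps `u ⊗ v ↦ u • δ(v, c)`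
  have hΨex : ∀ c, ∃ g : P.T →L[ℂ] X,
      ∀ u v, g (P.tmul u v) = sigma M u (delta2 M D v c) := by
    intro c
    obtain ⟨g, hg, -⟩ := P.lift
      (((ContinuousLinearMap.compL ℂ (WithLp 1 (Unitization ℂ A)) X X).flip
        ((delta2 M D).flip c)).comp (sigma M))
    exact ⟨g, fun u v => by simpa using hg u v⟩
  choose Ψ hΨ using hΨex
  -- identities between maps on the tensor square
  have I1 : ∀ s, Φ (P.flip s) = - Φ s := by
    intro s
    have := ext_T P (Φ.comp P.flip) (-Φ)
      (fun u v => by simp [P.flip_tmul, hΦ, hskew u v]) s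
    simpa using this
  have I2 : ∀ c s, P.flip (P.lcirc c s) = P.lmul c (P.flip s) := by
    intro c s
    have := ext_T P (P.flip.comp (P.lcirc c)) ((P.lmul c).comp P.flip)
      (fun u v => by simp [P.lcirc_tmul, P.flip_tmul, P.lmul_tmul]) s
    simpa using this
  have I3 : ∀ c s, P.flip (P.rcirc c s) = P.rmul c (P.flip s) := by
    intro c s
    have := ext_T P (P.flip.comp (P.rcirc c)) ((P.rmul c).comp P.flip)
      (fun u v => by simp [P.rcirc_tmul, P.flip_tmul, P.rmul_tmul]) s
    simpa using this
  have I4 : ∀ c s, Φ (P.rcirc c s) = - Ψ c s + Φ (P.lcirc c s) - Ψ c (P.flip s) := by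
    intro c s
    have := ext_T P (Φ.comp (P.rcirc c))
      (-(Ψ c) + Φ.comp (P.lcirc c) - (Ψ c).comp P.flip)
      (fun u v => by
        simp only [ContinuousLinearMap.comp_apply, ContinuousLinearMap.sub_apply,
          ContinuousLinearMap.add_apply, ContinuousLinearMap.neg_apply,
          P.rcirc_tmul, P.lcirc_tmul, P.flip_tmul, hΦ, hΨ]
        rw [hcoc u c v, hskew v c]
        simp only [map_neg]) s
    simpa using this
  have I5 : ∀ a b s, Ψ (a * b) s = Ψ b (P.rmul a s)
      - sigma M (P.π s) (delta2 M D a b) + sigma M b (Ψ a s) := by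
    intro a b s
    have := ext_T P (Ψ (a * b))
      (((Ψ b).comp (P.rmul a) - ((sigma M).flip (delta2 M D a b)).comp P.π)
        + (sigma M b).comp (Ψ a))
      (fun u v => by
        simp only [ContinuousLinearMap.comp_apply, ContinuousLinearMap.sub_apply,
          ContinuousLinearMap.add_apply, ContinuousLinearMap.flip_apply,
          P.rmul_tmul, P.π_tmul, hΨ]
        have h1 : delta2 M D v (a * b) = delta2 M D (v * a) b
            - sigma M v (delta2 M D a b) + sigma M b (delta2 M D v a) := by
          rw [hcoc v a b]; abel
        rw [h1, map_add, map_sub, hcom u b (delta2 M D v a),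
          ← hmul u v (delta2 M D a b)]) s
    simpa using this
  have I6 : ∀ a b s, Ψ b (P.lmul a s) = sigma M a (Ψ b s) := by
    intro a b s
    have := ext_T P ((Ψ b).comp (P.lmul a)) ((sigma M a).comp (Ψ b))
      (fun u v => by simp [P.lmul_tmul, hΨ, hmul]) s
    simpa using this
  -- limit facts
  have hπ1 : Tendsto (fun i => P.π (t i)) l (𝓝 1) := by simpa using hπ 1
  have L1 : ∀ c, Tendsto (fun i => Ψ c (t i)) l (𝓝 0) := by
    intro c
    have hd : Tendsto (fun i => Φ (P.lmul c (t i)) - Φ (P.rmul c (t i))) l (𝓝 0) := by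
      have := (Φ.continuous.tendsto 0).comp (hcomm c)
      simpa [Function.comp_def, map_sub] using this
    have heq : ∀ i, Ψ c (t i)
        = (-(2:ℂ)⁻¹) • (Φ (P.lmul c (t i)) - Φ (P.rmul c (t i))) := by
      intro i
      have h4 := I4 c (t i)
      rw [hflip i] at h4
      have hl2 : Φ (P.lmul c (t i)) = - Φ (P.lcirc c (t i)) := by
        have h := I1 (P.lcirc c (t i))
        rw [I2 c (t i), hflip i] at h
        exact h
      have hr2 : Φ (P.rmul c (t i)) = - Φ (P.rcirc c (t i)) := by
        have h := I1 (P.rcirc c (t i))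
        rw [I3 c (t i), hflip i] at h
        exact h
      rw [hl2, hr2, h4]
      module
    rw [tendsto_congr heq]
    simpa using hd.const_smul (-(2:ℂ)⁻¹)
  -- the defect vanishes
  have key : ∀ a b : WithLp 1 (Unitization ℂ A), delta2 M D a b = 0 := by
    intro a b
    have T1 : Tendsto (fun i => Ψ (a * b) (t i)) l (𝓝 0) := L1 _
    have T2a : Tendsto (fun i => Ψ b (P.lmul a (t i)) - Ψ b (P.rmul a (t i))) l (𝓝 0) := by
      have := ((Ψ b).continuous.tendsto 0).comp (hcomm a)
      simpa [Function.comp_def, map_sub] using this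
    have T2b : Tendsto (fun i => Ψ b (P.lmul a (t i))) l (𝓝 0) := by
      have h := ((sigma M a).continuous.tendsto 0).comp (L1 b)
      rw [show (fun i => Ψ b (P.lmul a (t i))) = fun i => sigma M a (Ψ b (t i))
        from funext fun i => I6 a b (t i)]
      simpa [Function.comp_def] using h
    have T2 : Tendsto (fun i => Ψ b (P.rmul a (t i))) l (𝓝 0) := by
      have := T2b.sub T2a
      simpa using this
    have T3 : Tendsto (fun i => sigma M (P.π (t i)) (delta2 M D a b)) l
        (𝓝 (delta2 M D a b)) := by
      have := (((sigma M).flip (delta2 M D a b)).continuous.tendsto 1).comp hπ1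
      simpa [Function.comp_def, hone] using this
    have T4 : Tendsto (fun i => sigma M b (Ψ a (t i))) l (𝓝 0) := by
      have := ((sigma M b).continuous.tendsto 0).comp (L1 a)
      simpa [Function.comp_def] using this
    have Tsum : Tendsto (fun i => Ψ b (P.rmul a (t i))
        - sigma M (P.π (t i)) (delta2 M D a b) + sigma M b (Ψ a (t i))) l
        (𝓝 (0 - delta2 M D a b + 0)) := (T2.sub T3).add T4
    have h0 := tendsto_nhds_unique ((tendsto_congr fun i => I5 a b (t i)).mp T1) Tsum
    rw [zero_sub, add_zero] at h0
    exact (neg_eq_zero.mp h0.symm)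
  -- conclude
  intro a b
  have h0 := key ((WithLp.equiv 1 (Unitization ℂ A)).symm (a : Unitization ℂ A))
    ((WithLp.equiv 1 (Unitization ℂ A)).symm (b : Unitization ℂ A))
  rw [delta2_apply'] at h0
  simp only [Equiv.apply_symm_apply, Unitization.snd_inr] at h0
  rw [sub_sub, sub_eq_zero] at h0
  rw [h0, ← hsymm b (D a)]
  abel
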